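/- A permutation σ ∈ S_n is indecomposable for the left shifted concatenation △ if and only if it has no global descent, where a global descent is a position i ∈ {1,...,n−1} such that σ(j) > σ(k) for all j ≤ i and all k > i. Moreover, if σ = σ_1 △ ⋯ △ σ_k with each σ_i △-indecomposable, then the global descents of σ are exactly |σ_1|, |σ_1|+|σ_2|, ..., |σ_1|+⋯+|σ_{k−1}|. -/

import Mathlib

/-- Standardization (0-based): replace each letter by its rank among the letters of `w`. -/
def stW (w : List ℕ) : List ℕ := w.map (fun x => (w.filter (· < x)).length)

/-- `w` is the one-line word of a permutation of `{0, …, n-1}` where `n = w.length`. -/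
def IsPermWord (w : List ℕ) : Prop := w.Perm (List.range w.length)

/-- The inversion set of a word: pairs `(j, i)` with `j > i` and `j` to the left of `i`. -/
def invSet (w : List ℕ) : Set (ℕ × ℕ) :=
  {p | p.2 < p.1 ∧ ∃ k l : ℕ, k < l ∧ w[k]? = some p.1 ∧ w[l]? = some p.2}

/-- The right weak order: inclusion of inversion sets. -/
def weakLe (u v : List ℕ) : Prop := invSet u ⊆ invSet v

/-- Left shifted concatenation `v △ u`: the word `v̄ u`, `v̄` being `v` shifted by `|u|`. -/
def triangle (v u : List ℕ) : List ℕ := v.map (· + u.length) ++ u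

/-- Right shifted concatenation `u □ v`: the word `u v̄`, `v̄` being `v` shifted by `|u|`. -/
def squareC (u v : List ℕ) : List ℕ := u ++ v.map (· + u.length)

/-- `i` is a global descent of `σ` (0-based: a cut position `0 < i < |σ|` such that
every letter strictly before position `i` exceeds every letter from position `i` on). -/
def GlobalDescent (σ : List ℕ) (i : ℕ) : Prop :=
  0 < i ∧ i < σ.length ∧
    ∀ j k : ℕ, j < i → i ≤ k → k < σ.length → σ.getD k 0 < σ.getD j 0

/-- A nonempty permutation word is `△`-indecomposable. -/
def TriIndec (w : List ℕ) : Prop :=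
  IsPermWord w ∧ w ≠ [] ∧
    ∀ u v : List ℕ, IsPermWord u → IsPermWord v → w = triangle v u → u = [] ∨ v = []

lemma permWord_lt {w : List ℕ} (h : IsPermWord w) {x : ℕ} (hx : x ∈ w) : x < w.length := by
  simpa using h.mem_iff.mp hx

lemma length_triangle (v u : List ℕ) : (triangle v u).length = v.length + u.length := by
  simp [triangle]

lemma getD_mem {l : List ℕ} {k : ℕ} (hk : k < l.length) : l.getD k 0 ∈ l := by
  rw [List.getD_eq_getElem _ _ hk]; exact List.getElem_mem _

lemma getD_triangle_left {v u : List ℕ} {k : ℕ} (hk : k < v.length) :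
    (triangle v u).getD k 0 = v.getD k 0 + u.length := by
  rw [List.getD_eq_getElem _ _ (by simp [length_triangle]; omega),
      List.getD_eq_getElem _ _ hk]
  show (v.map (· + u.length) ++ u)[k]'(by simp only [List.length_append, List.length_map]; omega) = _
  rw [List.getElem_append_left (by simpa using hk), List.getElem_map]

lemma getD_triangle_right {v u : List ℕ} {k : ℕ} (hk : v.length ≤ k)
    (hk' : k < v.length + u.length) :
    (triangle v u).getD k 0 = u.getD (k - v.length) 0 := by
  rw [List.getD_eq_getElem _ _ (by simp [length_triangle]; omega),
      List.getD_eq_getElem _ _ (by omega)]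
  show (v.map (· + u.length) ++ u)[k]'(by simp only [List.length_append, List.length_map]; omega) = _
  rw [List.getElem_append_right (by simpa using hk)]
  simp

lemma gd_triangle {u : List ℕ} (hu : IsPermWord u) (v : List ℕ) (i : ℕ) :
    GlobalDescent (triangle v u) i ↔
      GlobalDescent v i ∨ (i = v.length ∧ v ≠ [] ∧ u ≠ []) ∨
        ∃ i', GlobalDescent u i' ∧ i = v.length + i' := by
  constructor
  · rintro ⟨hi0, hilen, h⟩
    rw [length_triangle] at hilen
    rcases lt_trichotomy i v.length with hlt | heq | hgt
    · left
      refine ⟨hi0, hlt, fun j k hj hk hk' => ?_⟩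
      have := h j k hj hk (by rw [length_triangle]; omega)
      rw [getD_triangle_left (by omega : k < v.length),
          getD_triangle_left (by omega : j < v.length)] at this
      omega
    · right; left
      refine ⟨heq, ?_, ?_⟩
      · intro hv; rw [hv] at heq; simp at heq; omega
      · intro hu'; rw [hu'] at hilen; simp at hilen; omega
    · right; right
      refine ⟨i - v.length, ⟨by omega, by omega, fun j k hj hk hk' => ?_⟩, by omega⟩
      have := h (v.length + j) (v.length + k) (by omega) (by omega)
        (by rw [length_triangle]; omega)
      rw [getD_triangle_right (by omega) (by omega),
          getD_triangle_right (by omega) (by omega)] at this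
      simpa using this
  · rintro (⟨hi0, hilen, h⟩ | ⟨rfl, hv, hu'⟩ | ⟨i', ⟨hi0, hilen, h⟩, rfl⟩)
    · refine ⟨hi0, by rw [length_triangle]; omega, fun j k hj hk hk' => ?_⟩
      rw [length_triangle] at hk'
      have ej : (triangle v u).getD j 0 = v.getD j 0 + u.length :=
        getD_triangle_left (by omega)
      rcases lt_or_ge k v.length with hkv | hkv
      · have ek : (triangle v u).getD k 0 = v.getD k 0 + u.length :=
          getD_triangle_left hkv
        have := h j k hj hk hkv
        omega
      · have ek : (triangle v u).getD k 0 = u.getD (k - v.length) 0 :=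
          getD_triangle_right hkv (by omega)
        have := permWord_lt hu (getD_mem (l := u) (k := k - v.length) (by omega))
        omega
    · have hv0 : 0 < v.length := List.length_pos_iff.mpr hv
      have hu0 : 0 < u.length := List.length_pos_iff.mpr hu'
      refine ⟨hv0, by rw [length_triangle]; omega, fun j k hj hk hk' => ?_⟩
      rw [length_triangle] at hk'
      have ej : (triangle v u).getD j 0 = v.getD j 0 + u.length :=
        getD_triangle_left (by omega)
      have ek : (triangle v u).getD k 0 = u.getD (k - v.length) 0 :=
        getD_triangle_right hk (by omega)
      have := permWord_lt hu (getD_mem (l := u) (k := k - v.length) (by omega))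
      omega
    · refine ⟨by omega, by rw [length_triangle]; omega, fun j k hj hk hk' => ?_⟩
      rw [length_triangle] at hk'
      have ek : (triangle v u).getD k 0 = u.getD (k - v.length) 0 :=
        getD_triangle_right (by omega) (by omega)
      have hkval := permWord_lt hu (getD_mem (l := u) (k := k - v.length) (by omega))
      rcases lt_or_ge j v.length with hjv | hjv
      · have ej : (triangle v u).getD j 0 = v.getD j 0 + u.length :=
          getD_triangle_left hjv
        omega
      · have ej : (triangle v u).getD j 0 = u.getD (j - v.length) 0 :=
          getD_triangle_right hjv (by omega)
        have := h (j - v.length) (k - v.length) (by omega) (by omega) (by omega)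
        omega

lemma decomp_of_gd {σ : List ℕ} (hσ : IsPermWord σ) {i : ℕ} (hgd : GlobalDescent σ i) :
    ∃ u v : List ℕ, IsPermWord u ∧ IsPermWord v ∧ u ≠ [] ∧ v ≠ [] ∧ σ = triangle v u := by
  obtain ⟨hi0, hin, h⟩ := hgd
  have hnd : σ.Nodup := hσ.nodup_iff.mpr List.nodup_range
  have hTD : List.take i σ ++ List.drop i σ = σ := List.take_append_drop i σ
  have hTlen : (List.take i σ).length = i := by simp; omega
  have hDlen : (List.drop i σ).length = σ.length - i := by simp
  have hTnd : (List.take i σ).Nodup := (List.take_sublist i σ).nodup hnd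
  have hDnd : (List.drop i σ).Nodup := (List.drop_sublist i σ).nodup hnd
  have key : ∀ t ∈ List.take i σ, ∀ d ∈ List.drop i σ, d < t := by
    intro t ht d hd
    obtain ⟨j, hj, rfl⟩ := List.getElem_of_mem ht
    obtain ⟨k, hk, rfl⟩ := List.getElem_of_mem hd
    rw [List.length_take] at hj
    rw [List.length_drop] at hk
    have hjn : j < σ.length := by omega
    have hkn : i + k < σ.length := by omega
    have := h j (i + k) (by omega) (by omega) hkn
    rw [List.getD_eq_getElem _ _ hjn, List.getD_eq_getElem _ _ hkn] at this
    rw [List.getElem_take, List.getElem_drop]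
    exact this
  have hTsub : ∀ t ∈ List.take i σ, t ∈ σ := fun t ht => (List.take_subset i σ) ht
  have key2 : ∀ d ∈ List.drop i σ, d < σ.length - i := by
    intro d hd
    by_contra hds
    push_neg at hds
    have hsubF : (List.take i σ).toFinset ⊆ Finset.Ico (d + 1) σ.length := by
      intro t ht
      rw [List.mem_toFinset] at ht
      have h1 : d < t := key t ht d hd
      have h2 : t < σ.length := permWord_lt hσ (hTsub t ht)
      rw [Finset.mem_Ico]; omega
    have hc1 : (List.take i σ).toFinset.card = i := by
      rw [List.toFinset_card_of_nodup hTnd, hTlen]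
    have hc2 := Finset.card_le_card hsubF
    rw [hc1, Nat.card_Ico] at hc2
    omega
  have hDperm : (List.drop i σ).Perm (List.range (σ.length - i)) := by
    have hsub : List.drop i σ ⊆ List.range (σ.length - i) := by
      intro d hd
      rw [List.mem_range]
      exact key2 d hd
    exact (hDnd.subperm hsub).perm_of_length_le (by simp)
  have hDpw : IsPermWord (List.drop i σ) := by rw [IsPermWord, hDlen]; exact hDperm
  have hdisj : (List.take i σ).Disjoint (List.drop i σ) := by
    rw [← hTD] at hnd
    exact (List.nodup_append'.mp hnd).2.2
  have key3 : ∀ t ∈ List.take i σ, σ.length - i ≤ t := by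
    intro t ht
    by_contra hts
    push_neg at hts
    exact hdisj ht (hDperm.mem_iff.mpr (List.mem_range.mpr hts))
  have hvlen : ((List.take i σ).map (· - (σ.length - i))).length = i := by
    simp; omega
  have hmap : ((List.take i σ).map (· - (σ.length - i))).map (· + (σ.length - i)) =
      List.take i σ := by
    rw [List.map_map]
    have : ∀ a ∈ List.take i σ, ((· + (σ.length - i)) ∘ (· - (σ.length - i))) a = id a := by
      intro a ha
      simp [Nat.sub_add_cancel (key3 a ha)]
    rw [List.map_congr_left this, List.map_id]
  have hvpw : IsPermWord ((List.take i σ).map (· - (σ.length - i))) := by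
    rw [IsPermWord, hvlen]
    have hsub : (List.take i σ).map (· - (σ.length - i)) ⊆ List.range i := by
      intro x hx
      rw [List.mem_map] at hx
      obtain ⟨t, ht, rfl⟩ := hx
      have h1 := key3 t ht
      have h2 := permWord_lt hσ (hTsub t ht)
      rw [List.mem_range]
      omega
    have hvnd : ((List.take i σ).map (· - (σ.length - i))).Nodup := by
      refine hTnd.map_on ?_
      intro x hx y hy hxy
      have h1 := key3 x hx
      have h2 := key3 y hy
      omega
    exact (hvnd.subperm hsub).perm_of_length_le (by simp [hvlen]; omega)
  refine ⟨List.drop i σ, (List.take i σ).map (· - (σ.length - i)), hDpw, hvpw, ?_, ?_, ?_⟩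
  · intro hemp; rw [hemp] at hDlen; simp at hDlen; omega
  · intro hemp; rw [hemp] at hvlen; simp at hvlen; omega
  · rw [triangle, hDlen, hmap, hTD]

lemma triIndec_iff {σ : List ℕ} (hσ : IsPermWord σ) (hne : σ ≠ []) :
    TriIndec σ ↔ ∀ i, ¬ GlobalDescent σ i := by
  constructor
  · rintro ⟨-, -, hdec⟩ i hgd
    obtain ⟨u, v, hu, hv, hu', hv', heq⟩ := decomp_of_gd hσ hgd
    rcases hdec u v hu hv heq with h | h
    · exact hu' h
    · exact hv' h
  · intro hno
    refine ⟨hσ, hne, fun u v hu hv heq => ?_⟩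
    by_contra hcon
    push_neg at hcon
    obtain ⟨hu', hv'⟩ := hcon
    exact hno v.length (heq ▸ (gd_triangle hu v v.length).mpr
      (Or.inr (Or.inl ⟨rfl, hv', hu'⟩)))

lemma permWord_triangle {u v : List ℕ} (hu : IsPermWord u) (hv : IsPermWord v) :
    IsPermWord (triangle v u) := by
  rw [IsPermWord, length_triangle, triangle]
  have h1 : (v.map (· + u.length) ++ u).Perm
      (List.range u.length ++ (List.range v.length).map (· + u.length)) :=
    ((hv.map _).append hu).trans List.perm_append_comm
  have h2 : List.range u.length ++ (List.range v.length).map (· + u.length) =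
      List.range (u.length + v.length) := by
    rw [List.range_add]
    congr 1
    exact List.map_congr_left fun a _ => Nat.add_comm _ _
  rw [Nat.add_comm v.length u.length, ← h2]
  exact h1

lemma permWord_foldr {L : List (List ℕ)} (h : ∀ x ∈ L, IsPermWord x) :
    IsPermWord (L.foldr triangle []) := by
  induction L with
  | nil => simp [IsPermWord]
  | cons σ L' ih =>
    exact permWord_triangle (ih (fun x hx => h x (List.mem_cons_of_mem _ hx)))
      (h σ (List.mem_cons_self))

lemma foldr_ne_nil {L : List (List ℕ)} (h : ∀ x ∈ L, x ≠ []) (hL : L ≠ []) :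
    L.foldr triangle [] ≠ [] := by
  cases L with
  | nil => exact absurd rfl hL
  | cons σ L' =>
    intro hemp
    have := congrArg List.length hemp
    rw [List.foldr_cons, length_triangle] at this
    simp at this
    exact h σ (List.mem_cons_self) this.1

theorem triIndec_iff_no_globalDescent :
    (∀ σ : List ℕ, IsPermWord σ → σ ≠ [] →
      (TriIndec σ ↔ ∀ i, ¬ GlobalDescent σ i)) ∧
    (∀ L : List (List ℕ), (∀ x ∈ L, TriIndec x) →
      ∀ i, GlobalDescent (L.foldr triangle []) i ↔
        ∃ m, 0 < m ∧ m < L.length ∧ i = ((L.take m).map List.length).sum) := by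
  constructor
  · exact fun σ h1 h2 => triIndec_iff h1 h2
  · intro L
    induction L with
    | nil =>
      intro _ i
      simp only [List.foldr_nil, List.length_nil]
      constructor
      · rintro ⟨-, h, -⟩; simp at h
      · rintro ⟨m, -, hm, -⟩; omega
    | cons σ L' ih =>
      intro hL i
      have hσ : TriIndec σ := hL σ (List.mem_cons_self)
      have hL' : ∀ x ∈ L', TriIndec x := fun x hx => hL x (List.mem_cons_of_mem _ hx)
      have hupw : IsPermWord (L'.foldr triangle []) := permWord_foldr (fun x hx => (hL' x hx).1)
      have hnoσ : ∀ i, ¬ GlobalDescent σ i := (triIndec_iff hσ.1 hσ.2.1).mp hσ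
      rw [List.foldr_cons, gd_triangle hupw]
      constructor
      · rintro (hgd | ⟨rfl, -, hu'⟩ | ⟨i', hgd, rfl⟩)
        · exact absurd hgd (hnoσ i)
        · refine ⟨1, one_pos, ?_, by simp⟩
          have hne : L' ≠ [] := by
            intro hemp; rw [hemp] at hu'; exact hu' rfl
          have := List.length_pos_iff.mpr hne
          simp; omega
        · obtain ⟨m', hm0, hm', heq⟩ := (ih hL' i').mp hgd
          refine ⟨m' + 1, by omega, by simp; omega, ?_⟩
          rw [List.take_succ_cons]
          simp [heq]
      · rintro ⟨m, hm0, hmlen, rfl⟩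
        obtain ⟨m', rfl⟩ : ∃ m', m = m' + 1 := ⟨m - 1, by omega⟩
        rw [List.take_succ_cons]
        rcases Nat.eq_zero_or_pos m' with rfl | hm'0
        · right; left
          refine ⟨by simp, hσ.2.1, ?_⟩
          have hL'ne : L' ≠ [] := by
            intro hemp
            rw [hemp] at hmlen
            simp at hmlen
          exact foldr_ne_nil (fun x hx => (hL' x hx).2.1) hL'ne
        · right; right
          refine ⟨((L'.take m').map List.length).sum,
            (ih hL' _).mpr ⟨m', hm'0, ?_, rfl⟩, by simp⟩
          simp at hmlen
          omega
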